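/- Let V be a vector space with a metric g of Lorentzian signature, C a geodesic, and suppose the dipole stress-energy components satisfy ∇_Ċ(N_ν ξ^{μν}) = X^λ Ċ^β Ċ^ρ R^μ_{ρβλ} + ½ Ċ^ρ S^{λβ} R^μ_{ρβλ}, where ξ^{μν} = 2P^{(μ}Ċ^{ν)} − 2m Ċ^μ Ċ^ν, N = −Ċ_♭, N(Ċ) = 1, P_μ Ċ^μ = 0. Then projecting with Ċ_μ and with π^α_μ yields: ṁ = 0 (the mass is constant) and ∇_Ċ P^μ = ½ R^μ_{νρκ} Ċ^ν S^{κρ} + R^μ_{νρκ} Ċ^ν Ċ^ρ X^κ (the momentum equation). -/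

import Mathlib

/-- Covariant derivative along the worldline of a (1,0) tensor field;
`A^μ_ν = Γ^μ_{ρν} Ċ^ρ` is the connection contracted with the tangent. -/
noncomputable def D1 (A : ℝ → Fin 4 → Fin 4 → ℝ) (T : ℝ → Fin 4 → ℝ) :
    ℝ → Fin 4 → ℝ :=
  fun s μ => deriv (fun t => T t μ) s + ∑ ν, A s μ ν * T s ν

/-- The Dixon covector `N = -Ċ_♭`. -/
noncomputable def Ncov (g : ℝ → Fin 4 → Fin 4 → ℝ) (Cdot : ℝ → Fin 4 → ℝ) :
    ℝ → Fin 4 → ℝ :=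
  fun s ν => -∑ μ, g s μ ν * Cdot s μ

/-- The monopole/dipole stress-energy components
`ξ^{μν} = 2P^{(μ}Ċ^{ν)} - 2m Ċ^μ Ċ^ν`. -/
noncomputable def xi2 (P Cdot : ℝ → Fin 4 → ℝ) (m : ℝ → ℝ) :
    ℝ → Fin 4 → Fin 4 → ℝ :=
  fun s μ ν => P s μ * Cdot s ν + P s ν * Cdot s μ - 2 * m s * Cdot s μ * Cdot s ν

/-- Contraction of an antisymmetric bilinear expression with a symmetric
product vanishes. -/
lemma antisym_contract (U : Fin 4 → Fin 4 → ℝ) (V : Fin 4 → ℝ)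
    (h : ∀ a b, U a b = -U b a) :
    (∑ a, ∑ b, V a * V b * U a b) = 0 := by
  have h2 : (∑ a, ∑ b, V a * V b * U a b) = ∑ a, ∑ b, -(V a * V b * U a b) := by
    rw [Finset.sum_comm]
    refine Finset.sum_congr rfl fun a _ => Finset.sum_congr rfl fun b _ => ?_
    rw [h]; ring
  simp only [Finset.sum_neg_distrib] at h2
  linarith

set_option maxHeartbeats 3200000 in
/-- The momentum half of the Mathisson–Papapetrou–Tulczyjew–Dixon dipole
equations: from
`∇_Ċ(N_ν ξ^{μν}) = X^λ Ċ^β Ċ^ρ R^μ_{ρβλ} + ½ Ċ^ρ S^{λβ} R^μ_{ρβλ}`,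
projecting with `Ċ_μ` and with `π^α_μ` yields `ṁ = 0` and
`∇_Ċ P^μ = ½ R^μ_{νρκ} Ċ^ν S^{κρ} + R^μ_{νρκ} Ċ^ν Ċ^ρ X^κ`. -/
theorem dipole_momentum_equation
    (A g : ℝ → Fin 4 → Fin 4 → ℝ)
    (R : ℝ → Fin 4 → Fin 4 → Fin 4 → Fin 4 → ℝ)
    (Cdot X P : ℝ → Fin 4 → ℝ) (S : ℝ → Fin 4 → Fin 4 → ℝ) (m : ℝ → ℝ)
    (hgsym : ∀ s μ ν, g s μ ν = g s ν μ)
    (hgdiff : ∀ μ ν, Differentiable ℝ fun t => g t μ ν)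
    (hPdiff : ∀ μ, Differentiable ℝ fun t => P t μ)
    (hCdiff : ∀ μ, Differentiable ℝ fun t => Cdot t μ)
    (hmdiff : Differentiable ℝ m)
    (hgeo : ∀ s μ, D1 A Cdot s μ = 0)
    (hmetric : ∀ s μ ν, deriv (fun t => g t μ ν) s =
      ∑ ρ, A s ρ μ * g s ρ ν + ∑ ρ, A s ρ ν * g s μ ρ)
    (hnorm : ∀ s, ∑ μ, ∑ ν, g s μ ν * Cdot s μ * Cdot s ν = -1)
    (hXorth : ∀ s, ∑ μ, ∑ ν, g s μ ν * X s μ * Cdot s ν = 0)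
    (hPorth : ∀ s, ∑ μ, ∑ ν, g s μ ν * P s μ * Cdot s ν = 0)
    (hCS : ∀ s ν, ∑ μ, ∑ ρ, g s ρ μ * Cdot s ρ * S s μ ν = 0)
    (hSanti : ∀ s μ ν, S s μ ν = -(S s ν μ))
    (hRanti : ∀ s μ ν ρ κ, R s μ ν ρ κ = -(R s μ ν κ ρ))
    (hRanti2 : ∀ s μ ν ρ κ,
      ∑ σ, g s μ σ * R s σ ν ρ κ = -∑ σ, g s ν σ * R s σ μ ρ κ)
    (heq : ∀ s μ,
      D1 A (fun t μ' => ∑ ν, Ncov g Cdot t ν * xi2 P Cdot m t μ' ν) s μ =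
        (∑ lam, ∑ β, ∑ ρ, X s lam * Cdot s β * Cdot s ρ * R s μ ρ β lam) +
          (1 / 2) * ∑ ρ, ∑ lam, ∑ β, Cdot s ρ * S s lam β * R s μ ρ β lam) :
    (∀ s, deriv m s = 0) ∧
    (∀ s μ, D1 A P s μ =
      (1 / 2) * (∑ ν, ∑ ρ, ∑ κ, R s μ ν ρ κ * Cdot s ν * S s κ ρ) +
        ∑ ν, ∑ ρ, ∑ κ, R s μ ν ρ κ * Cdot s ν * Cdot s ρ * X s κ) := by
  -- orthogonality with the index moved to the first slot of `g`
  have hPorth2 : ∀ t, (∑ μ, ∑ ν, g t μ ν * Cdot t μ * P t ν) = 0 := by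
    intro t
    calc (∑ μ, ∑ ν, g t μ ν * Cdot t μ * P t ν)
        = ∑ μ, ∑ ν, g t ν μ * P t ν * Cdot t μ := by
          refine Finset.sum_congr rfl fun μ _ => Finset.sum_congr rfl fun ν _ => ?_
          rw [hgsym]; ring
      _ = ∑ ν, ∑ μ, g t ν μ * P t ν * Cdot t μ := Finset.sum_comm
      _ = 0 := hPorth t
  -- the contraction N_ν ξ^{μν}
  have key : ∀ t μ, (∑ ν, Ncov g Cdot t ν * xi2 P Cdot m t μ ν)
      = P t μ - 2 * m t * Cdot t μ := by
    intro t μ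
    have h1 := hnorm t
    have h2 := hPorth2 t
    simp only [Ncov, xi2, Fin.sum_univ_four] at h1 h2 ⊢
    linear_combination (-(P t μ) + 2 * m t * Cdot t μ) * h1 - Cdot t μ * h2
  -- geodesic equation gives the derivative of Ċ
  have hCd : ∀ s ν, deriv (fun t => Cdot t ν) s = -∑ ρ, A s ν ρ * Cdot s ρ := by
    intro s ν
    have h := hgeo s ν
    simp only [D1] at h
    linarith
  -- the dipole equation with the left side Leibniz-expanded
  have heq' : ∀ s μ, D1 A P s μ - 2 * deriv m s * Cdot s μ =
      (∑ lam, ∑ β, ∑ ρ, X s lam * Cdot s β * Cdot s ρ * R s μ ρ β lam) +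
        (1 / 2) * ∑ ρ, ∑ lam, ∑ β, Cdot s ρ * S s lam β * R s μ ρ β lam := by
    intro s μ
    have h := heq s μ
    simp only [D1, key] at h
    have hmul : HasDerivAt (fun t => 2 * m t * Cdot t μ)
        (2 * deriv m s * Cdot s μ + 2 * m s * deriv (fun t => Cdot t μ) s) s := by
      have h' := ((hmdiff s).hasDerivAt.const_mul (2:ℝ)).fun_mul ((hCdiff μ) s).hasDerivAt
      convert h' using 1
    have hd : HasDerivAt (fun t => P t μ - 2 * m t * Cdot t μ)
        (deriv (fun t => P t μ) s -
          (2 * deriv m s * Cdot s μ + 2 * m s * deriv (fun t => Cdot t μ) s)) s :=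
      ((hPdiff μ) s).hasDerivAt.sub hmul
    rw [hd.deriv, hCd s μ] at h
    simp only [D1]
    simp only [Fin.sum_univ_four] at h ⊢
    linear_combination h
  -- contraction of ∇_Ċ P with Ċ vanishes
  have ha : ∀ s, (∑ μ, (∑ σ, g s σ μ * Cdot s σ) * D1 A P s μ) = 0 := by
    intro s
    have hD : HasDerivAt (fun t => ∑ μ, ∑ ν, g t μ ν * Cdot t μ * P t ν)
        (∑ μ, ∑ ν, ((deriv (fun t => g t μ ν) s * Cdot s μ
            + g s μ ν * deriv (fun t => Cdot t μ) s) * P s ν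
          + g s μ ν * Cdot s μ * deriv (fun t => P t ν) s)) s :=
      HasDerivAt.fun_sum fun μ _ => HasDerivAt.fun_sum fun ν _ =>
        (((hgdiff μ ν) s).hasDerivAt.fun_mul ((hCdiff μ) s).hasDerivAt).fun_mul
          ((hPdiff ν) s).hasDerivAt
    have hzero : (fun t => ∑ μ, ∑ ν, g t μ ν * Cdot t μ * P t ν) = fun _ => (0:ℝ) :=
      funext fun t => hPorth2 t
    rw [hzero] at hD
    have hE := hD.unique (hasDerivAt_const s 0)
    simp only [hmetric, hCd] at hE
    simp only [D1]
    simp only [Fin.sum_univ_four] at hE ⊢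
    linear_combination hE
  -- contraction of Ċ with itself
  have hb : ∀ s, (∑ μ, (∑ σ, g s σ μ * Cdot s σ) * Cdot s μ) = -1 := by
    intro s
    have h1 := hnorm s
    simp only [Fin.sum_univ_four] at h1 ⊢
    linear_combination h1
  -- antisymmetric curvature contraction with Ċ ⊗ Ċ vanishes
  have hW : ∀ s β lam,
      (∑ a, ∑ b, Cdot s a * Cdot s b * (∑ σ, g s a σ * R s σ b β lam)) = 0 :=
    fun s β lam => antisym_contract _ _ (fun a b => hRanti2 s a b β lam)
  have hc1 : ∀ s, (∑ μ, (∑ σ, g s σ μ * Cdot s σ) *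
      (∑ lam, ∑ β, ∑ ρ, X s lam * Cdot s β * Cdot s ρ * R s μ ρ β lam)) = 0 := by
    intro s
    have step : (∑ μ, (∑ σ, g s σ μ * Cdot s σ) *
        (∑ lam, ∑ β, ∑ ρ, X s lam * Cdot s β * Cdot s ρ * R s μ ρ β lam))
        = ∑ lam, ∑ β, (X s lam * Cdot s β) *
            (∑ a, ∑ b, Cdot s a * Cdot s b * (∑ σ, g s a σ * R s σ b β lam)) := by
      simp only [Fin.sum_univ_four]; ring
    rw [step]
    refine Finset.sum_eq_zero fun lam _ => Finset.sum_eq_zero fun β _ => ?_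
    rw [hW s β lam, mul_zero]
  have hc2 : ∀ s, (∑ μ, (∑ σ, g s σ μ * Cdot s σ) *
      (∑ ρ, ∑ lam, ∑ β, Cdot s ρ * S s lam β * R s μ ρ β lam)) = 0 := by
    intro s
    have step : (∑ μ, (∑ σ, g s σ μ * Cdot s σ) *
        (∑ ρ, ∑ lam, ∑ β, Cdot s ρ * S s lam β * R s μ ρ β lam))
        = ∑ lam, ∑ β, (S s lam β) *
            (∑ a, ∑ b, Cdot s a * Cdot s b * (∑ σ, g s a σ * R s σ b β lam)) := by
      simp only [Fin.sum_univ_four]; ring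
    rw [step]
    refine Finset.sum_eq_zero fun lam _ => Finset.sum_eq_zero fun β _ => ?_
    rw [hW s β lam, mul_zero]
  -- the mass is constant
  have hm0 : ∀ s, deriv m s = 0 := by
    intro s
    have hcontr : (∑ μ, (∑ σ, g s σ μ * Cdot s σ) *
          (D1 A P s μ - 2 * deriv m s * Cdot s μ))
        = ∑ μ, (∑ σ, g s σ μ * Cdot s σ) *
            ((∑ lam, ∑ β, ∑ ρ, X s lam * Cdot s β * Cdot s ρ * R s μ ρ β lam) +
              (1 / 2) * ∑ ρ, ∑ lam, ∑ β, Cdot s ρ * S s lam β * R s μ ρ β lam) :=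
      Finset.sum_congr rfl fun μ _ => by rw [heq' s μ]
    have hL : (∑ μ, (∑ σ, g s σ μ * Cdot s σ) *
          (D1 A P s μ - 2 * deriv m s * Cdot s μ))
        = (∑ μ, (∑ σ, g s σ μ * Cdot s σ) * D1 A P s μ)
          - 2 * deriv m s * (∑ μ, (∑ σ, g s σ μ * Cdot s σ) * Cdot s μ) := by
      rw [Finset.mul_sum, ← Finset.sum_sub_distrib]
      exact Finset.sum_congr rfl fun μ _ => by ring
    have hR : (∑ μ, (∑ σ, g s σ μ * Cdot s σ) *
          ((∑ lam, ∑ β, ∑ ρ, X s lam * Cdot s β * Cdot s ρ * R s μ ρ β lam) +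
            (1 / 2) * ∑ ρ, ∑ lam, ∑ β, Cdot s ρ * S s lam β * R s μ ρ β lam))
        = (∑ μ, (∑ σ, g s σ μ * Cdot s σ) *
            (∑ lam, ∑ β, ∑ ρ, X s lam * Cdot s β * Cdot s ρ * R s μ ρ β lam))
          + (1 / 2) * (∑ μ, (∑ σ, g s σ μ * Cdot s σ) *
            (∑ ρ, ∑ lam, ∑ β, Cdot s ρ * S s lam β * R s μ ρ β lam)) := by
      rw [Finset.mul_sum, ← Finset.sum_add_distrib]
      exact Finset.sum_congr rfl fun μ _ => by ring
    rw [hL, hR, ha s, hb s, hc1 s, hc2 s] at hcontr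
    linarith
  refine ⟨hm0, fun s μ => ?_⟩
  have h := heq' s μ
  rw [hm0 s] at h
  simp only [Fin.sum_univ_four] at h ⊢
  linear_combination h
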